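/- Let ν be a probability measure on {−1,1}^n, let c ∈ (0,1] and ε > 0, and suppose ‖m(T_v ν) − m(ν)‖_2 ≤ ε‖v‖_2 for all v ∈ Sparse_c. Then for every v ∈ Sparse_c, log E_ν[e^{⟨v,X⟩}] − ⟨m(ν), v⟩ ≤ (ε/2)·‖v‖_2². -/

import Mathlib

open scoped BigOperators Classical

noncomputable section

/-- The ±1 value of a Boolean coordinate. -/
def sgn (b : Bool) : ℝ := if b then 1 else -1

/-- `μ` is a probability mass function on the finite type `Ω`. -/
def IsProb {Ω : Type*} [Fintype Ω] (μ : Ω → ℝ) : Prop :=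
  (∀ ω, 0 ≤ μ ω) ∧ ∑ ω, μ ω = 1

/-- KL divergence (with the convention `0 · log 0 = 0`, valid under `μ ≪ ν`). -/
def KL {Ω : Type*} [Fintype Ω] (μ ν : Ω → ℝ) : ℝ :=
  ∑ ω, μ ω * Real.log (μ ω / ν ω)

variable {ι : Type*} [Fintype ι] [DecidableEq ι]

/-- Mean vector of a measure on the cube `{−1,1}^ι`. -/
def meanVec (ν : (ι → Bool) → ℝ) (i : ι) : ℝ := ∑ x, ν x * sgn (x i)

/-- Covariance matrix entries. -/
def covMat (ν : (ι → Bool) → ℝ) (i j : ι) : ℝ :=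
  ∑ x, ν x * (sgn (x i) - meanVec ν i) * (sgn (x j) - meanVec ν j)

/-- Variance of coordinate `i`. -/
def varCoord (ν : (ι → Bool) → ℝ) (i : ι) : ℝ := covMat ν i i

/-- Influence matrix `Ψ(ν) = Cov(ν) · diag(Var)⁻¹`; inactive rows/columns vanish
(by the convention `x / 0 = 0`), so its operator norm is the operator norm on the
active subspace. -/
def Psi (ν : (ι → Bool) → ℝ) : Matrix ι ι ℝ :=
  fun i j => covMat ν i j / varCoord ν j

/-- Correlation matrix `Cor(ν) = diag(Var)^{-1/2} · Cov(ν) · diag(Var)^{-1/2}`. -/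
def Cor (ν : (ι → Bool) → ℝ) : Matrix ι ι ℝ :=
  fun i j => covMat ν i j / (Real.sqrt (varCoord ν i) * Real.sqrt (varCoord ν j))

/-- ℓ²→ℓ² operator norm of a matrix. -/
def opNorm (M : Matrix ι ι ℝ) : ℝ := ‖Matrix.toEuclideanCLM (𝕜 := ℝ) M‖

/-- The event described by the pinning `u` (`none` = unpinned, `some b` = pinned to `b`). -/
def pinEvent (u : ι → Option Bool) (x : ι → Bool) : Prop :=
  ∀ i, ∀ b, u i = some b → x i = b

/-- Probability mass of the pinning event. -/
def pinMass (ν : (ι → Bool) → ℝ) (u : ι → Option Bool) : ℝ :=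
  ∑ x ∈ Finset.univ.filter (fun x => pinEvent u x), ν x

/-- The pinned (conditioned) measure `R_u ν`. -/
def pin (ν : (ι → Bool) → ℝ) (u : ι → Option Bool) : (ι → Bool) → ℝ :=
  fun x => if pinEvent u x then ν x / pinMass ν u else 0

/-- Number of pinned coordinates. -/
def suppSize (u : ι → Option Bool) : ℕ :=
  (Finset.univ.filter (fun i => u i ≠ none)).card

/-- The tilt `T_v ν`. -/
def tilt (v : ι → ℝ) (ν : (ι → Bool) → ℝ) : (ι → Bool) → ℝ :=
  fun x => Real.exp (∑ i, v i * sgn (x i)) * ν x /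
    ∑ y, Real.exp (∑ i, v i * sgn (y i)) * ν y

/-- `v` has at most `⌈c·n⌉` nonzero coordinates. -/
def sparseSupp (c : ℝ) (n : ℕ) (v : Fin n → ℝ) : Prop :=
  (Finset.univ.filter (fun i => v i ≠ 0)).card ≤ ⌈c * n⌉₊


/-- Bound on the centered log-Laplace transform on sparse vectors.
If ‖m(T_v ν) − m(ν)‖₂ ≤ ε‖v‖₂ for all sparse v, then for every sparse v,
log E_ν[e^{⟨v,X⟩}] − ⟨m(ν),v⟩ ≤ (ε/2)‖v‖₂². -/
theorem logLaplace_bound_on_sparse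
    (n : ℕ) (ν : (Fin n → Bool) → ℝ) (hν : IsProb ν)
    (c ε : ℝ) (hc0 : 0 < c) (hc1 : c ≤ 1) (hε : 0 < ε)
    (hlip : ∀ v : Fin n → ℝ, sparseSupp c n v →
      Real.sqrt (∑ i, (meanVec (tilt v ν) i - meanVec ν i) ^ 2)
        ≤ ε * Real.sqrt (∑ i, v i ^ 2)) :
    ∀ v : Fin n → ℝ, sparseSupp c n v →
      Real.log (∑ x, Real.exp (∑ i, v i * sgn (x i)) * ν x) - (∑ i, meanVec ν i * v i)
        ≤ ε / 2 * ∑ i, v i ^ 2 := by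
  intro v hv
  set a : (Fin n → Bool) → ℝ := fun x => ∑ i, v i * sgn (x i) with ha
  set c0 : ℝ := ∑ i, meanVec ν i * v i with hc0def
  set C : ℝ := ∑ i, v i ^ 2 with hCdef
  have hC0 : 0 ≤ C := Finset.sum_nonneg fun i _ => sq_nonneg _
  set S : ℝ → ℝ := fun t => ∑ x, Real.exp (t * a x) * ν x with hSdef
  have hSpos : ∀ t, 0 < S t := by
    intro t
    obtain ⟨x, hx⟩ : ∃ x, 0 < ν x := by
      by_contra h
      push_neg at h
      have h0 : ∑ x, ν x = 0 :=
        Finset.sum_eq_zero fun x _ => le_antisymm (h x) (hν.1 x)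
      rw [hν.2] at h0; norm_num at h0
    exact Finset.sum_pos' (fun y _ => mul_nonneg (Real.exp_pos _).le (hν.1 y))
      ⟨x, Finset.mem_univ x, mul_pos (Real.exp_pos _) hx⟩
  set S' : ℝ → ℝ := fun t => ∑ x, Real.exp (t * a x) * a x * ν x with hS'def
  have hS : ∀ t, HasDerivAt S (S' t) t := by
    intro t
    apply HasDerivAt.fun_sum
    intro x _
    exact ((hasDerivAt_mul_const (a x)).exp).mul_const (ν x)
  set F : ℝ → ℝ := fun t => Real.log (S t) - t * c0 - ε / 2 * C * t ^ 2 with hFdef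
  have hF : ∀ t, HasDerivAt F (S' t / S t - c0 - ε * C * t) t := by
    intro t
    have h1 : HasDerivAt (fun t => Real.log (S t)) (S' t / S t) t :=
      (hS t).log (hSpos t).ne'
    have h2 : HasDerivAt (fun t : ℝ => t * c0) c0 t := hasDerivAt_mul_const c0
    have h3 : HasDerivAt (fun t : ℝ => ε / 2 * C * t ^ 2) (ε / 2 * C * (2 * t)) t := by
      simpa using (hasDerivAt_pow 2 t).const_mul (ε / 2 * C)
    have h4 := (h1.fun_sub h2).fun_sub h3
    rw [show S' t / S t - c0 - ε * C * t = S' t / S t - c0 - ε / 2 * C * (2 * t) by ring]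
    exact h4
  have hkey : ∀ t ∈ Set.Ioo (0:ℝ) 1, S' t / S t - c0 - ε * C * t ≤ 0 := by
    intro t ht
    obtain ⟨ht0, _⟩ := ht
    set w : Fin n → ℝ := fun i => t * v i with hwdef
    have hw : sparseSupp c n w := by
      refine le_trans (Finset.card_le_card ?_) hv
      intro i hi
      simp only [Finset.mem_filter, Finset.mem_univ, true_and, hwdef] at hi ⊢
      intro h0; exact hi (by rw [h0, mul_zero])
    have hZ : (∑ y, Real.exp (∑ i, w i * sgn (y i)) * ν y) = S t := by
      apply Finset.sum_congr rfl
      intro y _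
      have : (∑ i, w i * sgn (y i)) = t * a y := by
        simp [hwdef, ha, Finset.mul_sum, mul_assoc]
      rw [this]
    have hmean : ∀ i, meanVec (tilt w ν) i
        = (∑ x, Real.exp (t * a x) * ν x * sgn (x i)) / S t := by
      intro i
      rw [meanVec, Finset.sum_div]
      apply Finset.sum_congr rfl
      intro x _
      have h5 : (∑ j, w j * sgn (x j)) = t * a x := by
        simp [hwdef, ha, Finset.mul_sum, mul_assoc]
      simp only [tilt]
      rw [hZ, h5]
      ring
    have hS'eq : S' t = ∑ i, v i * (∑ x, Real.exp (t * a x) * ν x * sgn (x i)) := by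
      show (∑ x, Real.exp (t * a x) * a x * ν x) = _
      have hx : ∀ x : Fin n → Bool, Real.exp (t * a x) * a x * ν x
          = ∑ i, v i * (Real.exp (t * a x) * ν x * sgn (x i)) := by
        intro x
        show Real.exp (t * a x) * (∑ i, v i * sgn (x i)) * ν x = _
        rw [Finset.mul_sum, Finset.sum_mul]
        apply Finset.sum_congr rfl
        intro i _
        ring
      rw [Finset.sum_congr rfl fun x _ => hx x, Finset.sum_comm]
      apply Finset.sum_congr rfl
      intro i _
      rw [← Finset.mul_sum]
    have hSS : S' t / S t = ∑ i, v i * meanVec (tilt w ν) i := by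
      rw [hS'eq, Finset.sum_div]
      apply Finset.sum_congr rfl
      intro i _
      rw [hmean i, mul_div_assoc]
    have hCS : S' t / S t - c0 ≤ Real.sqrt (∑ i, (meanVec (tilt w ν) i - meanVec ν i) ^ 2)
        * Real.sqrt C := by
      have : S' t / S t - c0 = ∑ i, (meanVec (tilt w ν) i - meanVec ν i) * v i := by
        rw [hSS, hc0def, ← Finset.sum_sub_distrib]
        apply Finset.sum_congr rfl
        intro i _
        ring
      rw [this, hCdef]
      exact Real.sum_mul_le_sqrt_mul_sqrt _ _ _
    have hlipw := hlip w hw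
    have hwC : (∑ i, w i ^ 2) = t ^ 2 * C := by
      rw [hCdef, Finset.mul_sum]
      apply Finset.sum_congr rfl
      intro i _
      rw [hwdef]; ring
    have hsqrt : Real.sqrt (∑ i, w i ^ 2) = t * Real.sqrt C := by
      rw [hwC, Real.sqrt_mul (sq_nonneg t), Real.sqrt_sq ht0.le]
    rw [hsqrt] at hlipw
    have h6 : S' t / S t - c0 ≤ ε * (t * Real.sqrt C) * Real.sqrt C := by
      refine hCS.trans ?_
      exact mul_le_mul_of_nonneg_right hlipw (Real.sqrt_nonneg _)
    have h8 : Real.sqrt C * Real.sqrt C = C := Real.mul_self_sqrt hC0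
    have h7 : ε * (t * Real.sqrt C) * Real.sqrt C = ε * C * t := by
      calc ε * (t * Real.sqrt C) * Real.sqrt C = ε * t * (Real.sqrt C * Real.sqrt C) := by ring
        _ = ε * C * t := by rw [h8]; ring
    rw [h7] at h6
    linarith
  have hanti : AntitoneOn F (Set.Icc 0 1) := by
    apply antitoneOn_of_deriv_nonpos (convex_Icc 0 1)
    · exact (continuous_iff_continuousAt.2 fun t => (hF t).continuousAt).continuousOn
    · intro t _
      exact (hF t).differentiableAt.differentiableWithinAt
    · intro t ht
      rw [interior_Icc] at ht
      rw [(hF t).deriv]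
      exact hkey t ht
  have hF0 : F 0 = 0 := by
    have hS0 : S 0 = 1 := by
      rw [hSdef]
      simp only [zero_mul, Real.exp_zero, one_mul]
      exact hν.2
    simp [hFdef, hS0]
  have hF1 : F 1 ≤ 0 := by
    rw [← hF0]
    exact hanti (Set.mem_Icc.2 ⟨le_refl 0, zero_le_one⟩) (Set.mem_Icc.2 ⟨zero_le_one, le_refl 1⟩)
      zero_le_one
  have hS1 : S 1 = ∑ x, Real.exp (∑ i, v i * sgn (x i)) * ν x := by
    rw [hSdef]
    simp [ha]
  rw [hFdef] at hF1
  simp only [one_mul, one_pow] at hF1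
  rw [hS1] at hF1
  linarith


end
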